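/- arXiv:math/0211087 — 2 statements merged into one kernel-verified Lean document; each statement's English description precedes it below -/
import Mathlib

section
/- Let ζ be any Laurent polynomial in ℤ[q,q⁻¹]. Then there exists a unique Laurent polynomial ξ ∈ ℤ[q,q⁻¹] such that bar(ξ) = ξ and ζ + ξ ∈ qℤ[q], where bar is the ring automorphism of ℤ[q,q⁻¹] sending q to q⁻¹. -/
open LaurentPolynomial

/-- For any `ζ ∈ ℤ[q,q⁻¹]` there is a unique `ξ ∈ ℤ[q,q⁻¹]` with `bar ξ = ξ` and
`ζ + ξ ∈ qℤ[q]` (i.e. all coefficients of `ζ + ξ` in degrees `≤ 0` vanish), where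
`bar` is the ring automorphism sending `q` to `q⁻¹`. -/
theorem exists_unique_bar_invariant_correction (ζ : LaurentPolynomial ℤ) :
    ∃! ξ : LaurentPolynomial ℤ,
      invert ξ = ξ ∧ (∀ n : ℤ, n ≤ 0 → (ζ + ξ).coeff n = 0) := by
  set ξ : LaurentPolynomial ℤ :=
    -(AddMonoidAlgebra.ofCoeff (Finsupp.filter (· ≤ 0) ζ.coeff) : LaurentPolynomial ℤ) -
      invert (AddMonoidAlgebra.ofCoeff (Finsupp.filter (· < 0) ζ.coeff) : LaurentPolynomial ℤ) with hξ
  have hcoef : ∀ n : ℤ, ξ.coeff n =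
      -(if n ≤ 0 then ζ.coeff n else 0) - (if -n < 0 then ζ.coeff (-n) else 0) := by
    intro n
    rw [hξ]
    rw [AddMonoidAlgebra.coeff_sub, AddMonoidAlgebra.coeff_neg, Finsupp.sub_apply, Finsupp.neg_apply, invert_apply,
      AddMonoidAlgebra.coeff_ofCoeff, AddMonoidAlgebra.coeff_ofCoeff, Finsupp.filter_apply, Finsupp.filter_apply]
  refine ⟨ξ, ⟨?_, ?_⟩, ?_⟩
  · ext n
    rw [invert_apply, hcoef, hcoef]
    rcases lt_trichotomy n 0 with h | h | h
    · simp [h.le, h, not_lt.mpr h.le, not_le.mpr h]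
    · simp [h]
    · simp [h, not_le.mpr h, not_lt.mpr h.le]
  · intro n hn
    rw [AddMonoidAlgebra.coeff_add, Finsupp.add_apply, hcoef, if_pos hn, if_neg (by omega)]
    ring
  · intro ξ' ⟨hbar, hcorr⟩
    ext n
    rw [hcoef]
    rcases le_or_gt n 0 with h | h
    · have := hcorr n h
      rw [AddMonoidAlgebra.coeff_add, Finsupp.add_apply] at this
      rw [if_pos h, if_neg (by omega)]
      omega
    · have h2 : ξ'.coeff n = ξ'.coeff (-n) := by
        conv_lhs => rw [← hbar, invert_apply]
      have := hcorr (-n) (by omega)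
      rw [AddMonoidAlgebra.coeff_add, Finsupp.add_apply] at this
      rw [if_neg (by omega), if_pos (by omega)]
      omega
end

section
/- Let T be a semistandard Young tableau (rows weakly increasing from left to right, columns strictly increasing from top to bottom, column lengths weakly decreasing from left to right) with entries in {1, …, n+1}, with rows numbered 1, 2, … from the top. Suppose i is the smallest positive integer such that the entry i+1 occurs in some row m of T with m ≤ i. Let the reading word of T be the sequence of entries obtained by reading the columns from rightmost to leftmost, each column from top to bottom. Then there exists a prefix of the reading word that contains strictly more entries equal to i+1 than entries equal to i. -/
/-- The reading word of a tableau on the Young diagram `μ`: read the columns from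
rightmost to leftmost, each column from top to bottom.  (The diagram has
`μ.rowLen 0` columns, and column `c` has length `μ.colLen c`.) -/
def readingWord (μ : YoungDiagram) (T : SemistandardYoungTableau μ) : List ℕ :=
  ((List.range (μ.rowLen 0)).reverse).flatMap fun c =>
    (List.range (μ.colLen c)).map fun r => T r c

/-- Let `T` be a semistandard Young tableau with entries in `{1, …, n+1}`, rows
numbered `1, 2, …` from the top (so Lean's row index `r` is row `r + 1`).  If `i` is
the smallest positive integer such that the entry `i + 1` occurs in some row `m ≤ i`
of `T`, then some prefix of the reading word of `T` contains strictly more entries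
equal to `i + 1` than entries equal to `i`. -/
theorem exists_prefix_with_more_succ (n : ℕ) (μ : YoungDiagram)
    (T : SemistandardYoungTableau μ)
    (hentries : ∀ r c : ℕ, (r, c) ∈ μ → T r c ∈ Finset.Icc 1 (n + 1))
    (i : ℕ) (hi : 0 < i)
    (hocc : ∃ r c : ℕ, (r, c) ∈ μ ∧ r + 1 ≤ i ∧ T r c = i + 1)
    (hmin : ∀ j : ℕ, 0 < j →
      (∃ r c : ℕ, (r, c) ∈ μ ∧ r + 1 ≤ j ∧ T r c = j + 1) → i ≤ j) :
    ∃ w : List ℕ, w <+: readingWord μ T ∧ w.count i < w.count (i + 1) := by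
  classical
  obtain ⟨r0, c0, hmem0, hr0, hT0⟩ := hocc
  set L := μ.rowLen 0 with hL
  -- every entry is at least its (1-based) row number
  have hlow : ∀ r c : ℕ, (r, c) ∈ μ → r + 1 ≤ T r c := by
    intro r
    induction r with
    | zero =>
      intro c hc
      exact (Finset.mem_Icc.mp (hentries 0 c hc)).1
    | succ r ih =>
      intro c hc
      have hc' : (r, c) ∈ μ := μ.up_left_mem (Nat.le_succ r) le_rfl hc
      have h1 := ih c hc'
      have h2 : T r c < T (r + 1) c := T.col_strict (by omega) hc
      omega
  -- the letter i occurs only in row i-1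
  have hrow_i : ∀ a b : ℕ, (a, b) ∈ μ → T a b = i → a + 1 = i := by
    intro a b hab hTab
    have h1 : a + 1 ≤ i := by have := hlow a b hab; omega
    by_contra h
    have h3 : 0 < i - 1 := by omega
    have := hmin (i - 1) h3 ⟨a, b, hab, by omega, by omega⟩
    omega
  -- choose the rightmost column containing i+1 in a row ≤ i-1
  set P : ℕ → Prop := fun b => ∃ a, (a, b) ∈ μ ∧ a + 1 ≤ i ∧ T a b = i + 1 with hP
  have hinL : ∀ a b : ℕ, (a, b) ∈ μ → b < L := by
    intro a b hab
    rw [hL, ← YoungDiagram.mem_iff_lt_rowLen]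
    exact μ.up_left_mem (Nat.zero_le _) le_rfl hab
  have hPc0 : P c0 := ⟨r0, hmem0, hr0, hT0⟩
  set c := Nat.findGreatest P L with hc
  have hPc : P c := Nat.findGreatest_spec (le_of_lt (hinL r0 c0 hmem0)) hPc0
  obtain ⟨r, hmem, hr, hT⟩ := hPc
  have hcL : c < L := hinL r c hmem
  have hcmax : ∀ b, c < b → ¬ P b := by
    intro b hb hPb
    by_cases hbL : b ≤ L
    · exact Nat.findGreatest_is_greatest hb hbL hPb
    · obtain ⟨a, ha, -, -⟩ := hPb
      have := hinL a b ha
      omega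
  -- the letter i does not occur strictly to the right of column c
  have hnoI1 : ∀ a b : ℕ, (a, b) ∈ μ → c < b → T a b ≠ i := by
    intro a b hab hcb hTab
    have hai : a + 1 = i := hrow_i a b hab hTab
    have hac : (a, c) ∈ μ := μ.up_left_mem le_rfl (le_of_lt hcb) hab
    have hle : T a c ≤ T a b := T.row_weak hcb hab
    have hra : r ≤ a := by omega
    have hge : i + 1 ≤ T a c := by
      rcases eq_or_lt_of_le hra with h | h
      · rw [← h, hT]
      · have := T.col_strict h hac
        omega
    omega
  -- the letter i does not occur in column c at or above row r
  have hnoI2 : ∀ a : ℕ, a ≤ r → (a, c) ∈ μ → T a c ≠ i := by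
    intro a ha hac hTac
    have hai : a + 1 = i := hrow_i a c hac hTac
    have : a = r := by omega
    rw [this, hT] at hTac
    omega
  -- build the prefix
  set f : ℕ → List ℕ := fun b => (List.range (μ.colLen b)).map fun a => T a b with hf
  have hrcol : r + 1 ≤ μ.colLen c := YoungDiagram.mem_iff_lt_colLen.mp hmem
  set A : List ℕ := (List.range' (c + 1) (L - (c + 1))).reverse with hA
  set B : List ℕ := (List.range c).reverse with hB
  set w : List ℕ := A.flatMap f ++ (f c).take (r + 1) with hw
  have hdecomp : readingWord μ T = A.flatMap f ++ (f c ++ B.flatMap f) := by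
    have h1 : List.range L = List.range (c + 1) ++ List.range' (c + 1) (L - (c + 1)) := by
      rw [List.range_eq_range', List.range_eq_range']
      have h : List.range' 0 (c + 1) ++ List.range' (0 + (c + 1)) (L - (c + 1)) =
          List.range' 0 (L - (c + 1) + (c + 1)) :=
        List.range'_append_1.trans (congrArg (List.range' 0) (by omega))
      rw [Nat.zero_add] at h
      conv_lhs => rw [show L = L - (c + 1) + (c + 1) from by omega]
      exact h.symm
    have h2 : List.range (c + 1) = List.range c ++ [c] := by
      rw [List.range_succ]
    rw [readingWord, ← hL, h1, h2]
    simp only [List.reverse_append, List.flatMap_append, List.reverse_cons,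
      List.reverse_singleton, ← hA, ← hB, ← hf]
    simp [List.flatMap_cons]
  refine ⟨w, ?_, ?_⟩
  · refine ⟨(f c).drop (r + 1) ++ B.flatMap f, ?_⟩
    rw [hdecomp, hw, List.append_assoc, ← List.append_assoc ((f c).take (r + 1)),
      List.take_append_drop]
  · -- count i in w is 0, count (i+1) is positive
    have hmemw : T r c ∈ w := by
      rw [hw]
      refine List.mem_append_right _ ?_
      have : (f c).take (r + 1) = (List.range (r + 1)).map fun a => T a c := by
        rw [hf]
        simp only []
        rw [← List.map_take, List.take_range, Nat.min_eq_left hrcol]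
      rw [this]
      exact List.mem_map.mpr ⟨r, List.mem_range.mpr (Nat.lt_succ_self r), rfl⟩
    have hnoi : i ∉ w := by
      intro hiw
      rw [hw, List.mem_append] at hiw
      rcases hiw with h | h
      · rw [List.mem_flatMap] at h
        obtain ⟨b, hbA, hib⟩ := h
        rw [hA, List.mem_reverse, List.mem_range'_1] at hbA
        rw [hf] at hib
        simp only [List.mem_map, List.mem_range] at hib
        obtain ⟨a, hab, hTab⟩ := hib
        exact hnoI1 a b (YoungDiagram.mem_iff_lt_colLen.mpr hab) (by omega) hTab
      · have := List.mem_of_mem_take h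
        rw [hf] at this
        simp only [List.mem_map, List.mem_range] at this
        obtain ⟨a, hac, hTac⟩ := this
        have har : a ≤ r := by
          have : (f c).take (r + 1) = (List.range (r + 1)).map fun a => T a c := by
            rw [hf]
            simp only []
            rw [← List.map_take, List.take_range, Nat.min_eq_left hrcol]
          rw [this] at h
          simp only [List.mem_map, List.mem_range] at h
          obtain ⟨a', ha', hTa'⟩ := h
          -- use this occurrence instead
          exact absurd hTa'
            (hnoI2 a' (by omega)
              (YoungDiagram.mem_iff_lt_colLen.mpr (by omega)) |> fun hne => hne)
        exact hnoI2 a har (YoungDiagram.mem_iff_lt_colLen.mpr hac) hTac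
      |>.elim
    have h0 : w.count i = 0 := List.count_eq_zero.mpr hnoi
    have h1 : 0 < w.count (i + 1) := by
      rw [List.count_pos_iff]
      rw [← hT]
      exact hmemw
    omega
end
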